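/- Let X be a Hausdorff topological space, μ an inner regular Borel probability measure on X, and {Σ_t}_{t≥0} a monotone sub-semigroup family of set maps on X which commutes with arbitrary unions, with respect to which μ is accretive. Let K ⊆ X be a compact set and T₀ ≥ 0 such that Σ_t(K) ∩ K = ∅ for every t ≥ T₀, and assume that the orbit γ(K) = ⋃_{s≥0} Σ_s(K) and the set Σ_{T₀}(γ(K)) are μ-measurable. Then μ(K) = 0. -/

import Mathlib

open MeasureTheory Filter Topology
open scoped NNReal

/-- Core of the Poincaré-type recurrence for accretive measures: if `μ` is an
inner regular Borel probability measure on a Hausdorff space, accretive with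
respect to a monotone sub-semigroup family of set maps commuting with unions,
and `K` is a compact set such that `Sg t K ∩ K = ∅` for all `t ≥ T₀`, with the
orbit `γ(K)` and `Sg T₀ (γ(K))` both `μ`-measurable, then `μ K = 0`. -/
theorem measure_eq_zero_of_nonreturning_compact
    {X : Type*} [TopologicalSpace X] [T2Space X] [MeasurableSpace X] [BorelSpace X]
    (μ : Measure X) [IsProbabilityMeasure μ] [μ.InnerRegular]
    (Sg : ℝ≥0 → Set X → Set X)
    (hmono : ∀ (t : ℝ≥0) (A B : Set X), A ⊆ B → Sg t A ⊆ Sg t B)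
    (hsemi : ∀ (t s : ℝ≥0) (A : Set X), Sg t (Sg s A) ⊆ Sg (t + s) A)
    (hunion : ∀ (t : ℝ≥0) (A : Set X), Sg t A = ⋃ x ∈ A, Sg t {x})
    (haccr : ∀ (t : ℝ≥0) (B : Set X), MeasurableSet B →
      NullMeasurableSet (Sg t B) μ ∧ μ B ≤ μ (Sg t B))
    (K : Set X) (hK : IsCompact K)
    (T₀ : ℝ≥0)
    (hdisj : ∀ t : ℝ≥0, T₀ ≤ t → Sg t K ∩ K = ∅)
    (horbit : NullMeasurableSet (⋃ s : ℝ≥0, Sg s K) μ)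
    (hSgorbit : NullMeasurableSet (Sg T₀ (⋃ s : ℝ≥0, Sg s K)) μ) :
    μ K = 0 := by
  set γ : Set X := ⋃ s : ℝ≥0, Sg s K with hγ
  set Γ : Set X := K ∪ γ with hΓ
  have hKmeas : MeasurableSet K := hK.isClosed.measurableSet
  have hΓnm : NullMeasurableSet Γ μ := hKmeas.nullMeasurableSet.union horbit
  -- key inclusion : Sg T₀ Γ ⊆ Γ \ K
  have hkey : Sg T₀ Γ ⊆ Γ \ K := by
    have hpiece : ∀ s : ℝ≥0, Sg (T₀ + s) K ⊆ Γ \ K := by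
      intro s x hx
      refine ⟨Or.inr (Set.mem_iUnion.2 ⟨T₀ + s, hx⟩), fun hxK => ?_⟩
      have := hdisj (T₀ + s) le_self_add
      exact absurd (Set.mem_inter hx hxK) (by simp [this])
    rw [hunion T₀ Γ]
    rintro x hx
    simp only [Set.mem_iUnion] at hx
    obtain ⟨y, hy, hxy⟩ := hx
    rcases hy with hyK | hyγ
    · have h1 : Sg T₀ {y} ⊆ Sg T₀ K := hmono _ _ _ (Set.singleton_subset_iff.2 hyK)
      have h2 : Sg T₀ K ⊆ Γ \ K := by
        have := hpiece 0
        simpa using this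
      exact h2 (h1 hxy)
    · obtain ⟨s, hys⟩ := Set.mem_iUnion.1 hyγ
      have h1 : Sg T₀ {y} ⊆ Sg T₀ (Sg s K) := hmono _ _ _ (Set.singleton_subset_iff.2 hys)
      exact hpiece s (hsemi T₀ s K (h1 hxy))
  obtain ⟨B, hBsub, hBmeas, hBae⟩ := hΓnm.exists_measurable_subset_ae_eq
  have hμB : μ B = μ Γ := measure_congr hBae
  have chain : μ Γ ≤ μ (Γ \ K) := by
    calc μ Γ = μ B := hμB.symm
      _ ≤ μ (Sg T₀ B) := (haccr T₀ B hBmeas).2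
      _ ≤ μ (Sg T₀ Γ) := measure_mono (hmono _ _ _ hBsub)
      _ ≤ μ (Γ \ K) := measure_mono hkey
  have hsplit : μ (Γ ∩ K) + μ (Γ \ K) = μ Γ := measure_inter_add_diff Γ hKmeas
  have hΓK : Γ ∩ K = K := Set.inter_eq_right.2 Set.subset_union_left
  rw [hΓK] at hsplit
  have hfin : μ (Γ \ K) ≠ ⊤ := measure_ne_top μ _
  have : μ K + μ (Γ \ K) ≤ 0 + μ (Γ \ K) := by
    rw [hsplit, zero_add]; exact chain
  exact le_antisymm ((ENNReal.add_le_add_iff_right hfin).1 this) zero_le
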